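/- Let $\lambda:\mathbb{N}\to\mathbb{R}$ be a nonnegative multiplicative function and let $g(n) = \lambda(n)|\mu(n)|$ (so $g$ is supported on squarefree numbers). Suppose there is a constant $A > 0$ such that $\sum_{p \leq x} \lambda(p)\log p \leq A x \sqrt{\log x}$ for all $x \geq 2$. Then there is a constant $C > 0$ such that for all $x \geq 2$, $\sum_{n \leq x} g(n) \leq C \frac{x}{\sqrt{\log x}} \sum_{n \leq x} \frac{g(n)}{n}$. -/

import Mathlib

open scoped Classical ArithmeticFunction ArithmeticFunction.Moebius

theorem stmt_16 (lam : ℕ → ℝ) (hnn : ∀ n, 0 ≤ lam n) (hl1 : lam 1 = 1)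
    (hlm : ∀ m n : ℕ, Nat.Coprime m n → lam (m * n) = lam m * lam n)
    (g : ℕ → ℝ) (hg : ∀ n, g n = lam n * |(μ n : ℝ)|)
    (A : ℝ) (hA : 0 < A)
    (hyp : ∀ x : ℝ, 2 ≤ x →
      ∑ p ∈ (Finset.Icc 1 ⌊x⌋₊).filter Nat.Prime, lam p * Real.log p ≤
        A * x * Real.sqrt (Real.log x)) :
    ∃ C > 0, ∀ x : ℝ, 2 ≤ x →
      ∑ n ∈ Finset.Icc 1 ⌊x⌋₊, g n ≤
        C * (x / Real.sqrt (Real.log x)) * ∑ n ∈ Finset.Icc 1 ⌊x⌋₊, g n / n := by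
  classical
  have hgnn : ∀ n : ℕ, 0 ≤ g n := fun n => by
    rw [hg n]; exact mul_nonneg (hnn n) (abs_nonneg _)
  have hgsq : ∀ n : ℕ, Squarefree n → g n = lam n := by
    intro n hn
    rw [hg n]
    have : |(μ n : ℝ)| = 1 := by
      have := ArithmeticFunction.abs_moebius_eq_one_of_squarefree hn
      have : ((|μ n| : ℤ) : ℝ) = 1 := by exact_mod_cast congrArg (fun z : ℤ => (z : ℝ)) this
      rwa [Int.cast_abs] at this
    rw [this, mul_one]
  -- key decomposition lemma
  have key : ∀ n : ℕ, 1 ≤ n →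
      g n * Real.log n ≤ ∑ p ∈ n.primeFactors, lam p * g (n / p) * Real.log p := by
    intro n hn
    by_cases hsq : Squarefree n
    · have hlog : Real.log n = ∑ p ∈ n.primeFactors, Real.log p := by
        conv_lhs => rw [← Nat.prod_primeFactors_of_squarefree hsq]
        push_cast
        rw [Real.log_prod]
        intro p hp
        exact_mod_cast (Nat.prime_of_mem_primeFactors hp).pos.ne'
      rw [hlog, Finset.mul_sum]
      apply le_of_eq
      apply Finset.sum_congr rfl
      intro p hp
      have hpp := Nat.prime_of_mem_primeFactors hp
      have hpd : p ∣ n := Nat.dvd_of_mem_primeFactors hp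
      have hcop : Nat.Coprime p (n / p) := by
        rw [Nat.Prime.coprime_iff_not_dvd hpp]
        intro hdd
        have : p * p ∣ n := by
          have := Nat.mul_dvd_of_dvd_div hpd hdd
          exact (mul_comm p p ▸ this)
        exact hpp.not_isUnit (hsq p this)
      have hnp : p * (n / p) = n := Nat.mul_div_cancel' hpd
      have hsq' : Squarefree (n / p) := hsq.squarefree_of_dvd (Nat.div_dvd_of_dvd hpd)
      have hmul : lam n = lam p * lam (n / p) := by
        conv_lhs => rw [← hnp]
        exact hlm p (n/p) hcop
      rw [hgsq n hsq, hgsq _ hsq', hmul]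
    · have hμ : g n = 0 := by
        rw [hg n, ArithmeticFunction.moebius_eq_zero_of_not_squarefree hsq]
        simp
      rw [hμ, zero_mul]
      apply Finset.sum_nonneg
      intro p hp
      have hpp := Nat.prime_of_mem_primeFactors hp
      have : (0:ℝ) ≤ Real.log p := Real.log_nonneg (by exact_mod_cast hpp.one_lt.le)
      exact mul_nonneg (mul_nonneg (hnn p) (hgnn _)) this
  refine ⟨A + 2, by linarith, ?_⟩
  intro x hx
  set N := ⌊x⌋₊ with hN
  have hxpos : (0:ℝ) < x := by linarith
  have hNx : (N : ℝ) ≤ x := Nat.floor_le hxpos.le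
  set T := ∑ n ∈ Finset.Icc 1 N, g n / n with hT
  have hTnn : 0 ≤ T := Finset.sum_nonneg fun n _ => div_nonneg (hgnn n) (Nat.cast_nonneg n)
  -- the two pieces
  have h2 : ∑ n ∈ Finset.Icc 1 N, g n * (Real.log x - Real.log n) ≤ x * T := by
    rw [hT, Finset.mul_sum]
    apply Finset.sum_le_sum
    intro n hn
    have hn1 : 1 ≤ n := (Finset.mem_Icc.mp hn).1
    have hnpos : (0:ℝ) < n := by exact_mod_cast hn1
    have hdiv : (0:ℝ) < x / n := div_pos hxpos hnpos
    have hlog : Real.log x - Real.log n = Real.log (x / n) := (Real.log_div hxpos.ne' hnpos.ne').symm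
    have : Real.log x - Real.log n ≤ x / n := by
      rw [hlog]
      linarith [Real.log_le_sub_one_of_pos hdiv]
    calc g n * (Real.log x - Real.log n) ≤ g n * (x / n) :=
          mul_le_mul_of_nonneg_left this (hgnn n)
      _ = x * (g n / n) := by ring
  -- the main piece
  have h3 : ∑ n ∈ Finset.Icc 1 N, g n * Real.log n ≤ A * x * Real.sqrt (Real.log x) * T := by
    set G : ℕ × ℕ → ℝ := fun q => lam q.2 * g q.1 * Real.log q.2 with hGdef
    set P : Finset (ℕ × ℕ) := (Finset.Icc 1 N ×ˢ Finset.Icc 1 N).filter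
        (fun q => q.2.Prime ∧ q.1 * q.2 ≤ N) with hPdef
    have hGnn : ∀ q ∈ P, 0 ≤ G q := by
      intro q hq
      obtain ⟨-, hq2, -⟩ := Finset.mem_filter.mp hq |>.imp id (fun h => h)
      have hq2' : q.2.Prime := ((Finset.mem_filter.mp hq).2).1
      exact mul_nonneg (mul_nonneg (hnn _) (hgnn _))
        (Real.log_nonneg (by exact_mod_cast hq2'.one_lt.le))
    have step2 : ∑ n ∈ Finset.Icc 1 N, ∑ p ∈ n.primeFactors, lam p * g (n / p) * Real.log p
        ≤ ∑ q ∈ P, G q := by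
      set D : Finset ((_ : ℕ) × ℕ) := (Finset.Icc 1 N).sigma (fun n => n.primeFactors) with hDdef
      set i : (Σ _ : ℕ, ℕ) → ℕ × ℕ := fun q => (q.1 / q.2, q.2) with hidef
      have hmem : ∀ q ∈ D, q.2 ∣ q.1 ∧ q.2.Prime ∧ 1 ≤ q.1 ∧ q.1 ≤ N := by
        intro q hq
        obtain ⟨h1, h2⟩ := Finset.mem_sigma.mp hq
        obtain ⟨ha, hb⟩ := Finset.mem_Icc.mp h1
        exact ⟨Nat.dvd_of_mem_primeFactors h2, Nat.prime_of_mem_primeFactors h2, ha, hb⟩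
      have hinj : Set.InjOn i D := by
        intro a ha b hb hab
        obtain ⟨hda, -, ha1, -⟩ := hmem a ha
        obtain ⟨hdb, -, hb1, -⟩ := hmem b hb
        have h2 : a.2 = b.2 := congrArg Prod.snd hab
        have h1 : a.1 / a.2 = b.1 / b.2 := congrArg Prod.fst hab
        have : a.1 = b.1 := by
          rw [← Nat.mul_div_cancel' hda, ← Nat.mul_div_cancel' hdb, h1, h2]
        exact Sigma.ext this (heq_of_eq (by rw [h2]))
      have himg : D.image i ⊆ P := by
        intro q hq
        obtain ⟨a, ha, rfl⟩ := Finset.mem_image.mp hq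
        obtain ⟨hda, hpa, ha1, haN⟩ := hmem a ha
        have hppos : 0 < a.2 := hpa.pos
        have hdivpos : 1 ≤ a.1 / a.2 := Nat.div_pos (Nat.le_of_dvd ha1 hda) hppos
        refine Finset.mem_filter.mpr ⟨Finset.mem_product.mpr ⟨?_, ?_⟩, hpa, ?_⟩
        · exact Finset.mem_Icc.mpr ⟨hdivpos, le_trans (Nat.div_le_self _ _) haN⟩
        · exact Finset.mem_Icc.mpr ⟨hpa.one_lt.le.trans' (by norm_num), le_trans (Nat.le_of_dvd ha1 hda) haN⟩
        · show a.1 / a.2 * a.2 ≤ N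
          rw [Nat.div_mul_cancel hda]
          exact haN
      have hsum : ∑ n ∈ Finset.Icc 1 N, ∑ p ∈ n.primeFactors, lam p * g (n / p) * Real.log p
          = ∑ q ∈ D.image i, G q := by
        rw [Finset.sum_image (fun a ha b hb h => hinj ha hb h)]
        rw [hDdef, Finset.sum_sigma]
      rw [hsum]
      exact Finset.sum_le_sum_of_subset_of_nonneg himg (fun q hq _ => hGnn q hq)
    have step3 : ∑ q ∈ P, G q =
        ∑ m ∈ Finset.Icc 1 N, ∑ p ∈ (Finset.Icc 1 (N / m)).filter Nat.Prime,
          g m * (lam p * Real.log p) := by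
      rw [hPdef, Finset.sum_filter, Finset.sum_product]
      apply Finset.sum_congr rfl
      intro m hm
      have hm1 : 1 ≤ m := (Finset.mem_Icc.mp hm).1
      rw [← Finset.sum_filter]
      have hset : (Finset.Icc 1 N).filter (fun p => p.Prime ∧ m * p ≤ N)
          = (Finset.Icc 1 (N / m)).filter Nat.Prime := by
        ext p
        simp only [Finset.mem_filter, Finset.mem_Icc]
        constructor
        · rintro ⟨⟨hp1, -⟩, hpp, hmp⟩
          exact ⟨⟨hp1, (Nat.le_div_iff_mul_le hm1).mpr (by rwa [mul_comm])⟩, hpp⟩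
        · rintro ⟨⟨hp1, hpN⟩, hpp⟩
          have hmp : m * p ≤ N := by
            rw [mul_comm]
            exact (Nat.le_div_iff_mul_le hm1).mp hpN
          have hpN' : p ≤ N := le_trans (Nat.le_mul_of_pos_left p hm1) hmp
          exact ⟨⟨hp1, hpN'⟩, hpp, hmp⟩
      rw [hset]
      apply Finset.sum_congr rfl
      intro p hp
      show lam p * g m * Real.log p = g m * (lam p * Real.log p)
      ring
    have step4 : ∀ m ∈ Finset.Icc 1 N,
        ∑ p ∈ (Finset.Icc 1 (N / m)).filter Nat.Prime, lam p * Real.log p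
          ≤ A * (x / m) * Real.sqrt (Real.log x) := by
      intro m hm
      obtain ⟨hm1, hmN⟩ := Finset.mem_Icc.mp hm
      have hmR : (1:ℝ) ≤ (m:ℝ) := by exact_mod_cast hm1
      have hmpos : (0:ℝ) < m := by linarith
      have hfloor : N / m = ⌊x / (m:ℝ)⌋₊ := by
        rw [Nat.floor_div_natCast x m]
      have hxm_pos : 0 < x / m := div_pos hxpos hmpos
      have hxm_le : x / m ≤ x := div_le_self hxpos.le hmR
      by_cases h2m : 2 ≤ x / m
      · have hb := hyp (x / m) h2m
        rw [← hfloor] at hb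
        calc ∑ p ∈ (Finset.Icc 1 (N / m)).filter Nat.Prime, lam p * Real.log p
            ≤ A * (x / m) * Real.sqrt (Real.log (x / m)) := hb
          _ ≤ A * (x / m) * Real.sqrt (Real.log x) := by
              apply mul_le_mul_of_nonneg_left
              · exact Real.sqrt_le_sqrt (Real.log_le_log hxm_pos hxm_le)
              · positivity
      · have hlt : N / m ≤ 1 := by
          rw [hfloor]
          have hflt : ⌊x / (m:ℝ)⌋₊ < 2 :=
            (Nat.floor_lt hxm_pos.le).mpr (by exact_mod_cast lt_of_not_ge h2m)
          omega
        have hempty : (Finset.Icc 1 (N / m)).filter Nat.Prime = ∅ := by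
          apply Finset.filter_eq_empty_iff.mpr
          intro p hp
          have hpN : p ≤ 1 := le_trans (Finset.mem_Icc.mp hp).2 hlt
          intro hpp
          exact absurd hpN (by have := hpp.one_lt; omega)
        rw [hempty, Finset.sum_empty]
        positivity
    calc ∑ n ∈ Finset.Icc 1 N, g n * Real.log n
        ≤ ∑ n ∈ Finset.Icc 1 N, ∑ p ∈ n.primeFactors, lam p * g (n / p) * Real.log p :=
          Finset.sum_le_sum fun n hn => key n (Finset.mem_Icc.mp hn).1
      _ ≤ ∑ q ∈ P, G q := step2
      _ = ∑ m ∈ Finset.Icc 1 N, ∑ p ∈ (Finset.Icc 1 (N / m)).filter Nat.Prime,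
            g m * (lam p * Real.log p) := step3
      _ = ∑ m ∈ Finset.Icc 1 N, g m * ∑ p ∈ (Finset.Icc 1 (N / m)).filter Nat.Prime,
            (lam p * Real.log p) := by
          apply Finset.sum_congr rfl
          intro m _
          rw [Finset.mul_sum]
      _ ≤ ∑ m ∈ Finset.Icc 1 N, g m * (A * (x / m) * Real.sqrt (Real.log x)) := by
          apply Finset.sum_le_sum
          intro m hm
          exact mul_le_mul_of_nonneg_left (step4 m hm) (hgnn m)
      _ = A * x * Real.sqrt (Real.log x) * T := by
          rw [hT, Finset.mul_sum]
          apply Finset.sum_congr rfl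
          intro m hm
          have hm1 : 1 ≤ m := (Finset.mem_Icc.mp hm).1
          have : (m:ℝ) ≠ 0 := by positivity
          field_simp
  have hstep : (∑ n ∈ Finset.Icc 1 N, g n) * Real.log x ≤
      A * x * Real.sqrt (Real.log x) * T + x * T := by
    rw [Finset.sum_mul]
    calc ∑ n ∈ Finset.Icc 1 N, g n * Real.log x
        = ∑ n ∈ Finset.Icc 1 N, (g n * Real.log n + g n * (Real.log x - Real.log n)) := by
          apply Finset.sum_congr rfl; intro n _; ring
      _ = (∑ n ∈ Finset.Icc 1 N, g n * Real.log n)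
            + ∑ n ∈ Finset.Icc 1 N, g n * (Real.log x - Real.log n) := Finset.sum_add_distrib
      _ ≤ A * x * Real.sqrt (Real.log x) * T + x * T := add_le_add h3 h2
  -- final algebra
  have hl2 : Real.log 2 ≤ Real.log x := Real.log_le_log two_pos hx
  have hlpos : 0 < Real.log x := lt_of_lt_of_le (Real.log_pos one_lt_two) hl2
  set s := Real.sqrt (Real.log x) with hs
  have hspos : 0 < s := Real.sqrt_pos.mpr hlpos
  have hss : s * s = Real.log x := Real.mul_self_sqrt hlpos.le
  have hsge : 1 / 2 ≤ s := by
    rw [hs]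
    have h14 : (1/4 : ℝ) ≤ Real.log x := by
      have : (1/4 : ℝ) ≤ Real.log 2 := by
        have := Real.log_two_gt_d9
        linarith
      linarith
    have : Real.sqrt (1/4) ≤ Real.sqrt (Real.log x) := Real.sqrt_le_sqrt h14
    calc (1/2 : ℝ) = Real.sqrt (1/4) := by
          rw [show (1/4 : ℝ) = (1/2)^2 by norm_num, Real.sqrt_sq (by norm_num)]
      _ ≤ _ := this
  -- from hstep: S * s * s ≤ (A*s + 1) * (x*T), so S * s ≤ (A + 1/s)*x*T ≤ (A+2)*x*T
  set S := ∑ n ∈ Finset.Icc 1 N, g n with hS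
  have hSnn : 0 ≤ S := Finset.sum_nonneg fun n _ => hgnn n
  have h4 : S * (s * s) ≤ (A * s + 1) * (x * T) := by
    rw [hss]
    calc S * Real.log x ≤ A * x * s * T + x * T := hstep
      _ = (A * s + 1) * (x * T) := by ring
  have h5 : S * s ≤ (A + 2) * (x * T) := by
    have hinv : 1 ≤ 2 * s := by linarith
    nlinarith [mul_nonneg hxpos.le hTnn, mul_pos hspos hspos]
  calc S ≤ (A + 2) * (x * T) / s := by
        rw [le_div_iff₀ hspos]; exact h5
    _ = (A + 2) * (x / s) * T := by field_simp
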